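/- If a ternary signature with coefficients a₀,...,a₇ satisfies (a₀a₇ − a₂a₅ + a₁a₆ − a₃a₄)² − 4(a₂a₄ − a₀a₆)(a₃a₅ − a₁a₇) = 0, a₀a₃ = a₁a₂, a₅a₆ = a₄a₇, a₁a₄ = a₀a₅, a₃a₆ = a₂a₇, a₃a₅ = a₁a₇, and a₂a₄ = a₀a₆, then the signature is not genuinely entangled, i.e., it factors as a tensor product where at least one factor is a unary signature (a vector in ℂ²). -/

import Mathlib

lemma factor_first (M : Fin 2 → Fin 2 → Fin 2 → ℂ)
    (h : ∀ j k j' k', M 0 j k * M 1 j' k' = M 0 j' k' * M 1 j k) :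
    ∃ (u : Fin 2 → ℂ) (w : Fin 2 → Fin 2 → ℂ), ∀ i j k, M i j k = u i * w j k := by
  by_cases h0 : ∀ j k, M 0 j k = 0
  · refine ⟨![0, 1], M 1, ?_⟩
    intro i j k
    fin_cases i <;> simp [h0]
  · push_neg at h0
    obtain ⟨j₀, k₀, hne⟩ := h0
    refine ⟨![1, M 1 j₀ k₀ / M 0 j₀ k₀], M 0, ?_⟩
    intro i j k
    fin_cases i
    · simp
    · simp only [Fin.mk_one, Matrix.cons_val_one, Matrix.head_cons, Matrix.cons_val_zero]
      field_simp
      linear_combination - h j k j₀ k₀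

/-- If the GHZ polynomial of a ternary signature vanishes and all six W-type
inequalities fail (are equalities), then the signature is not genuinely entangled:
it factors with a unary tensor factor in some position.
Coefficients: ψ i j k is the coefficient of |ijk⟩, so a₀ = ψ 0 0 0, ..., a₇ = ψ 1 1 1. -/
theorem not_genuinely_entangled_of_conditions (ψ : Fin 2 → Fin 2 → Fin 2 → ℂ)
    (hpoly : (ψ 0 0 0 * ψ 1 1 1 - ψ 0 1 0 * ψ 1 0 1 + ψ 0 0 1 * ψ 1 1 0 - ψ 0 1 1 * ψ 1 0 0) ^ 2
      - 4 * (ψ 0 1 0 * ψ 1 0 0 - ψ 0 0 0 * ψ 1 1 0) * (ψ 0 1 1 * ψ 1 0 1 - ψ 0 0 1 * ψ 1 1 1) = 0)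
    (h1 : ψ 0 0 0 * ψ 0 1 1 = ψ 0 0 1 * ψ 0 1 0)
    (h2 : ψ 1 0 1 * ψ 1 1 0 = ψ 1 0 0 * ψ 1 1 1)
    (h3 : ψ 0 0 1 * ψ 1 0 0 = ψ 0 0 0 * ψ 1 0 1)
    (h4 : ψ 0 1 1 * ψ 1 1 0 = ψ 0 1 0 * ψ 1 1 1)
    (h5 : ψ 0 1 1 * ψ 1 0 1 = ψ 0 0 1 * ψ 1 1 1)
    (h6 : ψ 0 1 0 * ψ 1 0 0 = ψ 0 0 0 * ψ 1 1 0) :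
    (∃ (u : Fin 2 → ℂ) (w : Fin 2 → Fin 2 → ℂ), ∀ i j k, ψ i j k = u i * w j k) ∨
    (∃ (u : Fin 2 → ℂ) (w : Fin 2 → Fin 2 → ℂ), ∀ i j k, ψ i j k = u j * w i k) ∨
    (∃ (u : Fin 2 → ℂ) (w : Fin 2 → Fin 2 → ℂ), ∀ i j k, ψ i j k = u k * w i j) := by
  -- S := a0a7 - a2a5 + a1a6 - a3a4 satisfies S^2 = 0
  have hS2 : (ψ 0 0 0 * ψ 1 1 1 - ψ 0 1 0 * ψ 1 0 1 + ψ 0 0 1 * ψ 1 1 0 - ψ 0 1 1 * ψ 1 0 0) ^ 2 = 0 := by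
    linear_combination hpoly + 4 * (ψ 0 1 1 * ψ 1 0 1 - ψ 0 0 1 * ψ 1 1 1) * h6
  have hS : ψ 0 0 0 * ψ 1 1 1 - ψ 0 1 0 * ψ 1 0 1 + ψ 0 0 1 * ψ 1 1 0 - ψ 0 1 1 * ψ 1 0 0 = 0 :=
    (pow_eq_zero_iff two_ne_zero).mp hS2
  -- m1 := a0a7 - a3a4, m2 := a1a6 - a2a5;  m1^2 = 0
  have hm1sq : (ψ 0 0 0 * ψ 1 1 1 - ψ 0 1 1 * ψ 1 0 0) ^ 2 = 0 := by
    linear_combination (ψ 0 0 0 * ψ 1 1 1 - ψ 0 1 1 * ψ 1 0 0) * hS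
      + ψ 0 0 1 * ψ 1 1 1 * h6 - ψ 0 1 0 * ψ 1 0 0 * h5
      + (ψ 0 1 1 * ψ 1 1 0 - ψ 0 1 0 * ψ 1 1 1) * h3
      + ψ 1 0 1 * ψ 1 1 0 * h1 + ψ 0 0 1 * ψ 0 1 0 * h2
  have hm1 : ψ 0 0 0 * ψ 1 1 1 - ψ 0 1 1 * ψ 1 0 0 = 0 :=
    (pow_eq_zero_iff two_ne_zero).mp hm1sq
  have hm2 : ψ 0 0 1 * ψ 1 1 0 - ψ 0 1 0 * ψ 1 0 1 = 0 := by
    linear_combination hS - hm1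
  left
  apply factor_first
  simp only [Fin.forall_fin_two]
  and_intros <;>
    first
      | trivial
      | ring1
      | linear_combination h3 | linear_combination -h3
      | linear_combination h4 | linear_combination -h4
      | linear_combination h5 | linear_combination -h5
      | linear_combination h6 | linear_combination -h6
      | linear_combination hm1 | linear_combination -hm1
      | linear_combination hm2 | linear_combination -hm2
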